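/- Let g be a real number. For n ≥ 0 set P_n = L_n^{(g-1/2)} and define the exceptional (X₁) Laguerre polynomial P_{D,n}(η) = (η + g + 1/2)·P_n'(η) - (η + g + 3/2)·P_n(η), with the convention P_{D,m} = 0 for m < 0. Let X(η) = ½ η(η + 2g + 1). Then for every n ≥ 0 the five-term recurrence relation with constant coefficients X(η)·P_{D,n}(η) = Σ_{k=-2}^{2} r_{n,k} P_{D,n+k}(η) holds, where r_{n,2} = ½(n+1)(n+2), r_{n,1} = -(n+1)(2g+2n+3), r_{n,0} = ⅛(24n² + 4(10g+11)n + (2g+1)(6g+13)), r_{n,-1} = -½(2g+2n-1)(2g+2n+3), and r_{n,-2} = ⅛(2g+2n-3)(2g+2n+3). -/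

import Mathlib

open Polynomial

/-- The Laguerre polynomial `L_n^{(α)}` with real parameter:
`L_n^{(α)}(x) = Σ_{k=0}^{n} (-1)^k (α+k+1)_{n-k} / ((n-k)!·k!) · x^k`. -/
noncomputable def laguerreP (α : ℝ) (n : ℕ) : Polynomial ℝ :=
  ∑ k ∈ Finset.range (n + 1),
    Polynomial.C ((-1 : ℝ) ^ k * (ascPochhammer ℝ (n - k)).eval (α + k + 1) /
        ((n - k).factorial * k.factorial)) * Polynomial.X ^ k

/-- The exceptional (X₁) Laguerre polynomial
`P_{D,n}(η) = (η+g+½) P_n'(η) - (η+g+3/2) P_n(η)` with `P_n = L_n^{(g-1/2)}`. -/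
noncomputable def xLagP (g : ℝ) (n : ℕ) : Polynomial ℝ :=
  (Polynomial.X + Polynomial.C (g + 1/2)) *
      Polynomial.derivative (laguerreP (g - 1/2) n)
    - (Polynomial.X + Polynomial.C (g + 3/2)) * laguerreP (g - 1/2) n

/-- `xLagP` with integer index, with the convention `P_{D,m} = 0` for `m < 0`. -/
noncomputable def xLagPZ (g : ℝ) (m : ℤ) : Polynomial ℝ :=
  if 0 ≤ m then xLagP g m.toNat else 0

lemma coeff_laguerreP (α : ℝ) (n k : ℕ) :
    (laguerreP α n).coeff k =
      if k ≤ n then (-1 : ℝ) ^ k * (ascPochhammer ℝ (n - k)).eval (α + k + 1) /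
        ((n - k).factorial * k.factorial) else 0 := by
  unfold laguerreP
  rw [finset_sum_coeff]
  simp only [coeff_C_mul, coeff_X_pow, mul_ite, mul_one, mul_zero]
  rw [Finset.sum_ite_eq (Finset.range (n+1)) k]
  simp [Nat.lt_succ_iff]

lemma asc_left_eval (m : ℕ) (x : ℝ) :
    (ascPochhammer ℝ (m+1)).eval x = x * (ascPochhammer ℝ m).eval (x+1) := by
  rw [ascPochhammer_succ_left]
  simp [eval_comp]

lemma lag_zero (α : ℝ) : laguerreP α 0 = 1 := by
  simp [laguerreP]

lemma lag_one (α : ℝ) : laguerreP α 1 = Polynomial.C (α + 1) - Polynomial.X := by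
  simp [laguerreP, Finset.sum_range_succ]
  ring

lemma lag_shift (α : ℝ) (n : ℕ) :
    laguerreP α (n+1) = laguerreP (α+1) (n+1) - laguerreP (α+1) n := by
  ext k
  rw [coeff_sub, coeff_laguerreP, coeff_laguerreP, coeff_laguerreP]
  rcases le_or_gt k n with h | h
  · rw [if_pos (h.trans (Nat.le_succ n)), if_pos (h.trans (Nat.le_succ n)), if_pos h]
    obtain ⟨m, rfl⟩ := Nat.exists_eq_add_of_le h
    have e1 : k + m + 1 - k = m + 1 := by omega
    have e2 : k + m - k = m := by omega
    rw [e1, e2]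
    have hf1 : ((m.factorial : ℝ)) ≠ 0 := Nat.cast_ne_zero.2 m.factorial_ne_zero
    have hf2 : ((k.factorial : ℝ)) ≠ 0 := Nat.cast_ne_zero.2 k.factorial_ne_zero
    rw [asc_left_eval, ascPochhammer_succ_eval, Nat.factorial_succ]
    push_cast
    have : α + (k:ℝ) + 1 + 1 = α + 1 + k + 1 := by ring
    rw [this]
    field_simp
    ring
  · rcases eq_or_lt_of_le (Nat.succ_le_of_lt h) with h2 | h2
    · have hk : k = n + 1 := by omega
      subst hk
      rw [if_pos le_rfl, if_pos le_rfl, if_neg (by omega)]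
      simp
    · rw [if_neg (by omega), if_neg (by omega), if_neg (by omega)]
      simp

lemma deriv_lag_succ (α : ℝ) (n : ℕ) :
    Polynomial.derivative (laguerreP α (n+1)) = -laguerreP (α+1) n := by
  ext k
  rw [coeff_derivative, coeff_neg, coeff_laguerreP, coeff_laguerreP]
  rcases le_or_gt k n with h | h
  · rw [if_pos (by omega : k + 1 ≤ n + 1), if_pos h]
    have e1 : n + 1 - (k+1) = n - k := by omega
    rw [e1, Nat.factorial_succ]
    have hf1 : (((n-k).factorial : ℝ)) ≠ 0 := Nat.cast_ne_zero.2 (n-k).factorial_ne_zero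
    have hf2 : ((k.factorial : ℝ)) ≠ 0 := Nat.cast_ne_zero.2 k.factorial_ne_zero
    push_cast
    have : α + ((k:ℝ) + 1) + 1 = α + 1 + k + 1 := by ring
    rw [this, pow_succ]
    field_simp
  · rw [if_neg (by omega), if_neg (by omega)]
    simp

lemma three_term_succ (g : ℝ) (n : ℕ) :
    (2 : Polynomial ℝ) * (Polynomial.X * laguerreP (g+1/2) (n+1))
      = Polynomial.C (4*(n:ℝ)+2*g+7) * laguerreP (g+1/2) (n+1)
        - Polynomial.C (2*(n:ℝ)+4) * laguerreP (g+1/2) (n+2)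
        - Polynomial.C (2*(n:ℝ)+2*g+3) * laguerreP (g+1/2) n := by
  have h2 : (2 : Polynomial ℝ) = Polynomial.C 2 := (map_ofNat Polynomial.C 2).symm
  ext k
  rw [h2]
  rcases k with _ | k
  · simp only [coeff_sub, coeff_C_mul, mul_coeff_zero, coeff_C_zero, coeff_X_zero, zero_mul, mul_zero]
    rw [coeff_laguerreP, coeff_laguerreP, coeff_laguerreP,
      if_pos (by omega : 0 ≤ n+1), if_pos (by omega : 0 ≤ n+2), if_pos (by omega : 0 ≤ n)]
    simp only [Nat.sub_zero, Nat.cast_zero, add_zero]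
    rw [show n+2 = (n+1)+1 from rfl]
    simp only [ascPochhammer_succ_eval]
    have hf1 : ((n.factorial : ℝ)) ≠ 0 := Nat.cast_ne_zero.2 n.factorial_ne_zero
    rw [Nat.factorial_succ (n+1), Nat.factorial_succ n]
    push_cast
    field_simp
    ring
  · simp only [coeff_sub, coeff_C_mul, coeff_X_mul]
    rw [coeff_laguerreP, coeff_laguerreP, coeff_laguerreP, coeff_laguerreP]
    by_cases h1 : k + 1 ≤ n
    · -- interior case
      rw [if_pos (show k ≤ n+1 by omega), if_pos (show k+1 ≤ n+1 by omega),
        if_pos (show k+1 ≤ n+2 by omega), if_pos (show k+1 ≤ n by omega)]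
      obtain ⟨m, rfl⟩ := Nat.exists_eq_add_of_le h1
      have e1 : k + 1 + m + 1 - k = m + 2 := by omega
      have e2 : k + 1 + m + 1 - (k+1) = m + 1 := by omega
      have e3 : k + 1 + m + 2 - (k+1) = m + 2 := by omega
      have e4 : k + 1 + m - (k+1) = m := by omega
      rw [e1, e2, e3, e4]
      push_cast
      rw [show g+1/2+((k:ℝ)+1)+1 = (g+1/2+(k:ℝ)+1)+1 from by ring]
      rw [show m+2 = (m+1)+1 from rfl, asc_left_eval (m+1)]
      simp only [ascPochhammer_succ_eval]
      have hf1 : ((m.factorial : ℝ)) ≠ 0 := Nat.cast_ne_zero.2 m.factorial_ne_zero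
      have hf2 : ((k.factorial : ℝ)) ≠ 0 := Nat.cast_ne_zero.2 k.factorial_ne_zero
      rw [Nat.factorial_succ (m+1), Nat.factorial_succ m, Nat.factorial_succ k]
      push_cast
      rw [pow_succ]
      field_simp
      ring
    · by_cases hb : k = n
      · subst hb
        rw [if_pos (show k ≤ k+1 by omega), if_pos (show k+1 ≤ k+1 by omega),
          if_pos (show k+1 ≤ k+2 by omega), if_neg (show ¬ k+1 ≤ k by omega)]
        have e1 : k + 1 - k = 1 := by omega
        have e2 : k + 1 - (k+1) = 0 := by omega
        have e3 : k + 2 - (k+1) = 1 := by omega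
        rw [e1, e2, e3]
        simp only [ascPochhammer_one, ascPochhammer_zero, eval_X, eval_one]
        have hf2 : ((k.factorial : ℝ)) ≠ 0 := Nat.cast_ne_zero.2 k.factorial_ne_zero
        rw [Nat.factorial_succ k, Nat.factorial_zero]
        push_cast
        rw [pow_succ]
        field_simp
        ring
      · by_cases hc : k = n + 1
        · subst hc
          rw [if_pos (show n+1 ≤ n+1 by omega), if_neg (show ¬ n+1+1 ≤ n+1 by omega),
            if_pos (show n+1+1 ≤ n+2 by omega), if_neg (show ¬ n+1+1 ≤ n by omega)]
          rw [show n + 1 - (n+1) = 0 by omega, show n + 2 - (n+1+1) = 0 by omega]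
          simp only [ascPochhammer_zero, eval_one]
          have hf2 : (((n+1).factorial : ℝ)) ≠ 0 := Nat.cast_ne_zero.2 (n+1).factorial_ne_zero
          rw [show n+2 = (n+1)+1 from rfl, Nat.factorial_succ (n+1), Nat.factorial_zero,
            Nat.factorial_succ n]
          have hf1 : ((n.factorial : ℝ)) ≠ 0 := Nat.cast_ne_zero.2 n.factorial_ne_zero
          push_cast
          rw [pow_succ, pow_succ]
          field_simp
          ring
        · rw [if_neg (show ¬ k ≤ n+1 by omega), if_neg (show ¬ k+1 ≤ n+1 by omega),
            if_neg (show ¬ k+1 ≤ n+2 by omega), if_neg (show ¬ k+1 ≤ n by omega)]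
          ring

noncomputable def lagZ (β : ℝ) (m : ℤ) : Polynomial ℝ :=
  if 0 ≤ m then laguerreP β m.toNat else 0

lemma lagZ_ofNat (β : ℝ) (k : ℕ) : lagZ β (k : ℤ) = laguerreP β k := by
  simp [lagZ]

lemma lagZ_neg (β : ℝ) (m : ℤ) (h : m < 0) : lagZ β m = 0 := by
  simp [lagZ, not_le.2 h]

lemma hC2 (x : ℝ) : (2 : Polynomial ℝ) * Polynomial.C x = Polynomial.C (2*x) := by
  rw [show (2 : Polynomial ℝ) = Polynomial.C 2 from (map_ofNat Polynomial.C 2).symm, ← C_mul]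

lemma three_term_zero (g : ℝ) :
    (2 : Polynomial ℝ) * (Polynomial.X * laguerreP (g+1/2) 0)
      = Polynomial.C (2*g+3) * laguerreP (g+1/2) 0 - 2 * laguerreP (g+1/2) 1 := by
  rw [lag_zero, lag_one]
  have h : (2 : Polynomial ℝ) * Polynomial.C (g+1/2+1) = Polynomial.C (2*g+3) := by
    rw [hC2]; exact congrArg Polynomial.C (by ring)
  linear_combination h

lemma lagZ_tt (g : ℝ) (m : ℤ) :
    (2 : Polynomial ℝ) * (Polynomial.X * lagZ (g+1/2) m)
      = Polynomial.C (4*(m:ℝ)+2*g+3) * lagZ (g+1/2) m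
        - Polynomial.C (2*(m:ℝ)+2) * lagZ (g+1/2) (m+1)
        - Polynomial.C (2*(m:ℝ)+2*g+1) * lagZ (g+1/2) (m-1) := by
  rcases m with k | k
  · simp only [Int.ofNat_eq_coe]
    rcases k with _ | j
    · rw [show ((0:ℕ):ℤ) + 1 = ((1:ℕ):ℤ) by norm_num, lagZ_ofNat, lagZ_ofNat,
        lagZ_neg _ _ (by norm_num)]
      push_cast
      rw [show 4*(0:ℝ)+2*g+3 = 2*g+3 by ring, show 2*(0:ℝ)+2 = 2 by ring]
      have hc : Polynomial.C ((2:ℝ)) = 2 := map_ofNat Polynomial.C 2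
      linear_combination three_term_zero g + laguerreP (g+1/2) 1 * hc
    · rw [show ((j+1:ℕ):ℤ) + 1 = ((j+2:ℕ):ℤ) by push_cast; ring,
        show ((j+1:ℕ):ℤ) - 1 = ((j:ℕ):ℤ) by push_cast; ring,
        lagZ_ofNat, lagZ_ofNat, lagZ_ofNat]
      push_cast
      rw [show 4*((j:ℝ)+1)+2*g+3 = 4*(j:ℝ)+2*g+7 by ring,
        show 2*((j:ℝ)+1)+2 = 2*(j:ℝ)+4 by ring,
        show 2*((j:ℝ)+1)+2*g+1 = 2*(j:ℝ)+2*g+3 by ring]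
      exact three_term_succ g j
  · rcases k with _ | j
    · rw [show Int.negSucc 0 + 1 = ((0:ℕ):ℤ) by rfl, lagZ_ofNat,
        lagZ_neg _ _ (by exact Int.negSucc_lt_zero 0),
        lagZ_neg _ _ (by have := Int.negSucc_lt_zero 0; omega)]
      have : (2*((Int.negSucc 0 : ℤ):ℝ)+2) = 0 := by norm_num
      rw [this]
      simp
    · rw [show Int.negSucc (j+1) + 1 = Int.negSucc j by rfl,
        lagZ_neg _ _ (Int.negSucc_lt_zero _),
        lagZ_neg _ _ (Int.negSucc_lt_zero _),
        lagZ_neg _ _ (by have := Int.negSucc_lt_zero (j+1); omega)]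
      simp

lemma xlag_zero' (g : ℝ) : xLagP g 0 = -(Polynomial.X + Polynomial.C (g+3/2)) := by
  unfold xLagP
  rw [lag_zero]
  simp

lemma xlag_succ (g : ℝ) (n : ℕ) :
    xLagP g (n+1) = laguerreP (g+1/2) n
      - (Polynomial.X + Polynomial.C (g+3/2)) * laguerreP (g+1/2) (n+1) := by
  unfold xLagP
  rw [deriv_lag_succ, lag_shift, show g - 1/2 + 1 = g + 1/2 by ring]
  have hc : Polynomial.C (g+3/2) - Polynomial.C (g+1/2) = 1 := by
    rw [← C_sub]; norm_num
  linear_combination (laguerreP (g+1/2) n) * hc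

lemma xlagZ_eq (g : ℝ) (m : ℤ) :
    (2 : Polynomial ℝ) * xLagPZ g m
      = 2 * lagZ (g+1/2) (m-1)
        - (2*Polynomial.X + Polynomial.C (2*g+3)) * lagZ (g+1/2) m := by
  have hc2 : (2 : Polynomial ℝ) * Polynomial.C (g+3/2) = Polynomial.C (2*g+3) := by
    rw [hC2]; exact congrArg Polynomial.C (by ring)
  rcases m with k | k
  · simp only [Int.ofNat_eq_coe]
    rcases k with _ | j
    · rw [show ((0:ℕ):ℤ) - 1 = Int.negSucc 0 by rfl, lagZ_neg _ _ (Int.negSucc_lt_zero 0),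
        lagZ_ofNat]
      have hx : xLagPZ g ((0:ℕ):ℤ) = xLagP g 0 := by
        unfold xLagPZ; rw [if_pos (Int.natCast_nonneg _)]; norm_num
      rw [hx, xlag_zero', lag_zero]
      linear_combination -hc2
    · rw [show ((j+1:ℕ):ℤ) - 1 = ((j:ℕ):ℤ) by push_cast; ring, lagZ_ofNat, lagZ_ofNat]
      have hx : xLagPZ g ((j+1:ℕ):ℤ) = xLagP g (j+1) := by
        unfold xLagPZ; rw [if_pos (Int.natCast_nonneg _)]; norm_num
      rw [hx, xlag_succ]
      linear_combination -(laguerreP (g+1/2) (j+1)) * hc2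
  · rw [show (xLagPZ g (Int.negSucc k)) = 0 by
        unfold xLagPZ; rw [if_neg (not_le.2 (Int.negSucc_lt_zero k))],
      lagZ_neg _ _ (Int.negSucc_lt_zero _),
      lagZ_neg _ _ (by have := Int.negSucc_lt_zero k; omega)]
    simp

/-- the five-term recurrence relation with constant coefficients
`X(η)·P_{D,n}(η) = Σ_{k=-2}^{2} r_{n,k} P_{D,n+k}(η)` for the X₁ Laguerre
polynomials, with `X(η) = ½η(η+2g+1)`. -/
theorem xlaguerre_five_term_recurrence (g : ℝ) (n : ℕ) :
    Polynomial.C ((2 : ℝ))⁻¹ * Polynomial.X * (Polynomial.X + Polynomial.C (2 * g + 1))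
        * xLagP g n
    = Polynomial.C (((n : ℝ) + 1) * ((n : ℝ) + 2) / 2) * xLagPZ g ((n : ℤ) + 2)
      + Polynomial.C (-(((n : ℝ) + 1) * (2 * g + 2 * (n : ℝ) + 3))) *
          xLagPZ g ((n : ℤ) + 1)
      + Polynomial.C ((24 * (n : ℝ) ^ 2 + 4 * (10 * g + 11) * (n : ℝ)
            + (2 * g + 1) * (6 * g + 13)) / 8) * xLagPZ g (n : ℤ)
      + Polynomial.C (-((2 * g + 2 * (n : ℝ) - 1) * (2 * g + 2 * (n : ℝ) + 3)) / 2) *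
          xLagPZ g ((n : ℤ) - 1)
      + Polynomial.C ((2 * g + 2 * (n : ℝ) - 3) * (2 * g + 2 * (n : ℝ) + 3) / 8) *
          xLagPZ g ((n : ℤ) - 2) := by
  have hP : xLagP g n = xLagPZ g (n : ℤ) := by
    unfold xLagPZ; rw [if_pos (Int.natCast_nonneg _)]; norm_num
  rw [hP]
  apply mul_left_cancel₀ (show (Polynomial.C (16:ℝ)) ≠ 0 from
    Polynomial.C_ne_zero.mpr (by norm_num))
  -- hypotheses
  have a2 := xlagZ_eq g ((n:ℤ)+2)
  rw [show (n:ℤ)+2-1 = (n:ℤ)+1 by ring] at a2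
  have a1 := xlagZ_eq g ((n:ℤ)+1)
  rw [show (n:ℤ)+1-1 = (n:ℤ) by ring] at a1
  have a0 := xlagZ_eq g ((n:ℤ))
  have am1 := xlagZ_eq g ((n:ℤ)-1)
  rw [show (n:ℤ)-1-1 = (n:ℤ)-2 by ring] at am1
  have am2 := xlagZ_eq g ((n:ℤ)-2)
  rw [show (n:ℤ)-2-1 = (n:ℤ)-3 by ring] at am2
  have h1 := lagZ_tt g ((n:ℤ)+1)
  rw [show (n:ℤ)+1+1 = (n:ℤ)+2 by ring, show (n:ℤ)+1-1 = (n:ℤ) by ring] at h1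
  have h0 := lagZ_tt g ((n:ℤ))
  have hm1 := lagZ_tt g ((n:ℤ)-1)
  rw [show (n:ℤ)-1+1 = (n:ℤ) by ring, show (n:ℤ)-1-1 = (n:ℤ)-2 by ring] at hm1
  have hm2 := lagZ_tt g ((n:ℤ)-2)
  rw [show (n:ℤ)-2+1 = (n:ℤ)-1 by ring, show (n:ℤ)-2-1 = (n:ℤ)-3 by ring] at hm2
  push_cast at a2 a1 a0 am1 am2 h1 h0 hm1 hm2
  simp only [C_add, C_mul, C_sub, C_neg, C_pow, C_1, C_0, map_ofNat, map_natCast]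
    at a2 a1 a0 am1 am2 h1 h0 hm1 hm2
  have eL : Polynomial.C (16:ℝ) * Polynomial.C ((2:ℝ))⁻¹ = 8 := by
    rw [← C_mul, show (16:ℝ)*((2:ℝ))⁻¹ = 8 by norm_num]
    exact map_ofNat Polynomial.C 8
  have eB : Polynomial.C (2*g+1) = 2 * Polynomial.C g + 1 := by
    simp only [C_add, C_mul, map_ofNat, C_1]
  have e2 : Polynomial.C (16:ℝ) * Polynomial.C (((n : ℝ) + 1) * ((n : ℝ) + 2) / 2)
      = 8*((n:Polynomial ℝ)+1)*((n:Polynomial ℝ)+2) := by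
    rw [← C_mul, show (16:ℝ) * (((n : ℝ) + 1) * ((n : ℝ) + 2) / 2)
        = 8*((n:ℝ)+1)*((n:ℝ)+2) by ring]
    simp only [C_add, C_mul, C_1, map_ofNat, map_natCast]
  have e1 : Polynomial.C (16:ℝ) * Polynomial.C (-(((n : ℝ) + 1) * (2 * g + 2 * (n : ℝ) + 3)))
      = (-16)*((n:Polynomial ℝ)+1)*(2*Polynomial.C g+2*(n:Polynomial ℝ)+3) := by
    rw [← C_mul, show (16:ℝ) * (-(((n : ℝ) + 1) * (2 * g + 2 * (n : ℝ) + 3)))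
        = (-16)*((n:ℝ)+1)*(2*g+2*(n:ℝ)+3) by ring]
    simp only [C_add, C_mul, C_neg, C_1, map_ofNat, map_natCast]
  have e0 : Polynomial.C (16:ℝ) * Polynomial.C ((24 * (n : ℝ) ^ 2 + 4 * (10 * g + 11) * (n : ℝ)
        + (2 * g + 1) * (6 * g + 13)) / 8)
      = 2*(24*(n:Polynomial ℝ)^2 + 4*(10*Polynomial.C g+11)*(n:Polynomial ℝ)
        + (2*Polynomial.C g+1)*(6*Polynomial.C g+13)) := by
    rw [← C_mul, show (16:ℝ) * ((24 * (n : ℝ) ^ 2 + 4 * (10 * g + 11) * (n : ℝ)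
        + (2 * g + 1) * (6 * g + 13)) / 8)
        = 2*(24*(n:ℝ)^2 + 4*(10*g+11)*(n:ℝ) + (2*g+1)*(6*g+13)) by ring]
    simp only [C_add, C_mul, C_pow, C_1, map_ofNat, map_natCast]
  have em1 : Polynomial.C (16:ℝ) * Polynomial.C (-((2 * g + 2 * (n : ℝ) - 1) * (2 * g + 2 * (n : ℝ) + 3)) / 2)
      = (-8)*(2*Polynomial.C g+2*(n:Polynomial ℝ)-1)*(2*Polynomial.C g+2*(n:Polynomial ℝ)+3) := by
    rw [← C_mul, show (16:ℝ) * (-((2 * g + 2 * (n : ℝ) - 1) * (2 * g + 2 * (n : ℝ) + 3)) / 2)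
        = (-8)*(2*g+2*(n:ℝ)-1)*(2*g+2*(n:ℝ)+3) by ring]
    simp only [C_add, C_mul, C_sub, C_neg, C_1, map_ofNat, map_natCast]
  have em2 : Polynomial.C (16:ℝ) * Polynomial.C ((2 * g + 2 * (n : ℝ) - 3) * (2 * g + 2 * (n : ℝ) + 3) / 8)
      = 2*(2*Polynomial.C g+2*(n:Polynomial ℝ)-3)*(2*Polynomial.C g+2*(n:Polynomial ℝ)+3) := by
    rw [← C_mul, show (16:ℝ) * ((2 * g + 2 * (n : ℝ) - 3) * (2 * g + 2 * (n : ℝ) + 3) / 8)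
        = 2*(2*g+2*(n:ℝ)-3)*(2*g+2*(n:ℝ)+3) by ring]
    simp only [C_add, C_mul, C_sub, C_neg, C_1, map_ofNat, map_natCast]
  linear_combination (norm := ring)
    (Polynomial.X*(Polynomial.X+Polynomial.C (2*g+1))*xLagPZ g ((n:ℤ))) * eL
    + (8*Polynomial.X*xLagPZ g ((n:ℤ))) * eB
    - (xLagPZ g ((n:ℤ)+2)) * e2
    - (xLagPZ g ((n:ℤ)+1)) * e1
    - (xLagPZ g ((n:ℤ))) * e0
    - (xLagPZ g ((n:ℤ)-1)) * em1
    - (xLagPZ g ((n:ℤ)-2)) * em2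
    + ((9:Polynomial ℝ) - 4*(n:Polynomial ℝ)^2 - 8*Polynomial.C g*(n:Polynomial ℝ)
        - 4*(Polynomial.C g)^2) * am2
    + ((-12:Polynomial ℝ) + 16*(n:Polynomial ℝ) + 16*(n:Polynomial ℝ)^2 + 16*Polynomial.C g
        + 32*Polynomial.C g*(n:Polynomial ℝ) + 16*(Polynomial.C g)^2) * am1
    + ((-13:Polynomial ℝ) - 44*(n:Polynomial ℝ) - 24*(n:Polynomial ℝ)^2 - 32*Polynomial.C g
        - 40*Polynomial.C g*(n:Polynomial ℝ) - 12*(Polynomial.C g)^2 + 4*Polynomial.X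
        + 8*Polynomial.X*Polynomial.C g + 4*Polynomial.X^2) * a0
    + ((24:Polynomial ℝ) + 40*(n:Polynomial ℝ) + 16*(n:Polynomial ℝ)^2 + 16*Polynomial.C g
        + 16*Polynomial.C g*(n:Polynomial ℝ)) * a1
    + ((-8:Polynomial ℝ) - 12*(n:Polynomial ℝ) - 4*(n:Polynomial ℝ)^2) * a2
    + ((-6:Polynomial ℝ) - 4*(n:Polynomial ℝ) - 4*Polynomial.C g) * hm2
    + ((21:Polynomial ℝ) + 14*(n:Polynomial ℝ) + 20*Polynomial.C g
        + 4*Polynomial.C g*(n:Polynomial ℝ) + 4*(Polynomial.C g)^2 + 6*Polynomial.X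
        + 4*Polynomial.X*(n:Polynomial ℝ) + 4*Polynomial.X*Polynomial.C g) * hm1
    + ((-23:Polynomial ℝ) - 16*(n:Polynomial ℝ) - 28*Polynomial.C g
        - 8*Polynomial.C g*(n:Polynomial ℝ) - 12*(Polynomial.C g)^2 - 16*Polynomial.X
        - 8*Polynomial.X*(n:Polynomial ℝ) - 16*Polynomial.X*Polynomial.C g
        - 4*Polynomial.X^2) * h0
    + ((6:Polynomial ℝ) + 6*(n:Polynomial ℝ) + 4*Polynomial.C g
        + 4*Polynomial.C g*(n:Polynomial ℝ) + 4*Polynomial.X + 4*Polynomial.X*(n:Polynomial ℝ)) * h1
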